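/- For every integer n ≥ 2 and every integer i ≥ 1, the i-th term of the lower central series of the Lie algebra u_n equals u_{n,2} = P_1∂_2 ⊕ ⋯ ⊕ P_{n-1}∂_n; that is, the lower central series of u_n stabilizes at the first step. -/

import Mathlib

open MvPolynomial

noncomputable section


/-- If a derivation of `MvPolynomial σ K` maps every generator `X j`, `j ∈ s`, into the
subalgebra `supported K s` of polynomials supported on `s`, then it maps the whole of
`supported K s` into itself. -/
theorem Derivation.mem_supported_of_forall_mem
    {K : Type*} [CommRing K] {σ : Type*} (s : Set σ)
    (D : Derivation K (MvPolynomial σ K) (MvPolynomial σ K))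
    (h : ∀ j ∈ s, D (X j) ∈ supported K s)
    {p : MvPolynomial σ K} (hp : p ∈ supported K s) : D p ∈ supported K s := by
  rw [supported_eq_adjoin_X] at hp
  induction hp using Algebra.adjoin_induction with
  | mem x hx =>
    obtain ⟨j, hj, rfl⟩ := hx
    exact h j hj
  | algebraMap r =>
    rw [Derivation.map_algebraMap]
    exact zero_mem _
  | add x y hx hy ihx ihy =>
    rw [map_add]
    exact add_mem ihx ihy
  | mul x y hx hy ihx ihy =>
    rw [Derivation.leibniz, smul_eq_mul, smul_eq_mul]
    rw [← supported_eq_adjoin_X] at hx hy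
    exact add_mem (mul_mem hx ihy) (mul_mem hy ihx)

/-- If a derivation of `MvPolynomial σ K` kills every generator `X j`, `j ∈ s`, then it
kills the whole subalgebra `supported K s`. -/
theorem Derivation.eq_zero_of_forall_eq_zero
    {K : Type*} [CommRing K] {σ : Type*} (s : Set σ)
    (D : Derivation K (MvPolynomial σ K) (MvPolynomial σ K))
    (h : ∀ j ∈ s, D (X j) = 0)
    {p : MvPolynomial σ K} (hp : p ∈ supported K s) : D p = 0 := by
  rw [supported_eq_adjoin_X] at hp
  induction hp using Algebra.adjoin_induction with
  | mem x hx =>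
    obtain ⟨j, hj, rfl⟩ := hx
    exact h j hj
  | algebraMap r =>
    rw [Derivation.map_algebraMap]
  | add x y hx hy ihx ihy =>
    rw [map_add, ihx, ihy, add_zero]
  | mul x y hx hy ihx ihy =>
    rw [Derivation.leibniz, ihx, ihy, smul_zero, smul_zero, add_zero]

/-- The defining condition for the Lie algebra `u_n = K∂₁ ⊕ P₁∂₂ ⊕ ⋯ ⊕ P_{n-1}∂ₙ` of
triangular polynomial derivations of `P_n = K[x₁,…,xₙ]` (variables indexed by `Fin n`,
zero-based): a derivation `D` of `P_n` is triangular iff, for every `i`, the polynomial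
`D (X i)` only involves the variables `X j` with `j < i` (so the coefficient of `∂_i`
lies in `P_{i-1}`, where `P₀ = K`). -/
def triSet (K : Type*) [Field K] (n : ℕ) :
    Set (Derivation K (MvPolynomial (Fin n) K) (MvPolynomial (Fin n) K)) :=
  {D | ∀ i : Fin n, D (X i) ∈ supported K {j : Fin n | (j : ℕ) < (i : ℕ)}}

theorem supported_upward {K : Type*} [Field K] {n : ℕ}
    (p : MvPolynomial (Fin n) K) (s t : Set (Fin n)) (hst : s ⊆ t)
    (hp : p ∈ supported K s) : p ∈ supported K t :=
  supported_mono hst hp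

theorem triSet_stable {K : Type*} [Field K] {n : ℕ}
    {D : Derivation K (MvPolynomial (Fin n) K) (MvPolynomial (Fin n) K)}
    (hD : D ∈ triSet K n) (i : Fin n) :
    ∀ j ∈ {j' : Fin n | (j' : ℕ) < (i : ℕ)},
      D (X j) ∈ supported K {j' : Fin n | (j' : ℕ) < (i : ℕ)} := by
  intro j hj
  refine supported_upward _ {j' : Fin n | (j' : ℕ) < (j : ℕ)} _ ?_ (hD j)
  intro l hl
  have hl' : (l : ℕ) < (j : ℕ) := hl
  have hj' : (j : ℕ) < (i : ℕ) := hj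
  exact lt_trans hl' hj'

theorem triSet_lie {K : Type*} [Field K] {n : ℕ}
    {a b : Derivation K (MvPolynomial (Fin n) K) (MvPolynomial (Fin n) K)}
    (ha : a ∈ triSet K n) (hb : b ∈ triSet K n) : ⁅a, b⁆ ∈ triSet K n := by
  intro i
  rw [Derivation.commutator_apply]
  exact sub_mem
    (Derivation.mem_supported_of_forall_mem _ a (triSet_stable ha i) (hb i))
    (Derivation.mem_supported_of_forall_mem _ b (triSet_stable hb i) (ha i))

/-- The Lie algebra `u_n = K∂₁ ⊕ P₁∂₂ ⊕ ⋯ ⊕ P_{n-1}∂ₙ` of triangular polynomial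
derivations, as a Lie subalgebra of the Lie algebra of all `K`-derivations of the
polynomial algebra `P_n = K[x₁,…,xₙ]`. -/
def triangular (K : Type*) [Field K] (n : ℕ) :
    LieSubalgebra K (Derivation K (MvPolynomial (Fin n) K) (MvPolynomial (Fin n) K)) where
  carrier := triSet K n
  add_mem' := fun {a b} ha hb i => by
    rw [Derivation.add_apply]; exact add_mem (ha i) (hb i)
  zero_mem' := fun i => by
    rw [Derivation.zero_apply]; exact zero_mem _
  smul_mem' := fun c a ha i => by
    rw [Derivation.smul_apply]; exact Subalgebra.smul_mem _ (ha i) c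
  lie_mem' := fun {a b} ha hb => triSet_lie ha hb

theorem mem_triangular_iff {K : Type*} [Field K] {n : ℕ}
    (D : Derivation K (MvPolynomial (Fin n) K) (MvPolynomial (Fin n) K)) :
    D ∈ triangular K n ↔
      ∀ i : Fin n, D (X i) ∈ supported K {j : Fin n | (j : ℕ) < (i : ℕ)} := Iff.rfl

/-- The subspace `u_{n,k+1} = ⊕_{j ≥ k+1} P_{j-1}∂_j` of `u_n` (1-based indexing as in the
paper): the triangular derivations whose coefficients at `∂₁, …, ∂_k` vanish, i.e.
(zero-based) `D (X j) = 0` for all `j < k`. -/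
def lowIdeal (K : Type*) [Field K] (n k : ℕ) : Submodule K ↥(triangular K n) where
  carrier := {a | ∀ j : Fin n, (j : ℕ) < k → a.val (X j) = 0}
  add_mem' := by
    intro a b ha hb j hj
    have hab : (a + b : ↥(triangular K n)).val = a.val + b.val := rfl
    rw [hab, Derivation.add_apply, ha j hj, hb j hj, add_zero]
  zero_mem' := by
    intro j hj
    have h0 : (0 : ↥(triangular K n)).val = 0 := rfl
    rw [h0, Derivation.zero_apply]
  smul_mem' := by
    intro c a ha j hj
    have hca : (c • a : ↥(triangular K n)).val = c • a.val := rfl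
    rw [hca, Derivation.smul_apply, ha j hj, smul_zero]

/-- Formal integration with respect to the variable `i`. -/
def intVar {K : Type*} [Field K] {σ : Type*} [DecidableEq σ] (i : σ)
    (p : MvPolynomial σ K) : MvPolynomial σ K :=
  ∑ m ∈ p.support, monomial (m + Finsupp.single i 1) (p.coeff m / ((m i : K) + 1))

theorem intVar_zero {K : Type*} [Field K] {σ : Type*} [DecidableEq σ] (i : σ) :
    intVar i (0 : MvPolynomial σ K) = 0 := by
  simp [intVar]

theorem pderiv_intVar {K : Type*} [Field K] [CharZero K] {σ : Type*} [DecidableEq σ] (i : σ)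
    (p : MvPolynomial σ K) : pderiv i (intVar i p) = p := by
  unfold intVar
  rw [map_sum]
  refine Eq.trans (Finset.sum_congr rfl fun m _ => ?_) (support_sum_monomial_coeff p)
  rw [pderiv_monomial]
  have h1 : m + Finsupp.single i 1 - Finsupp.single i 1 = m := add_tsub_cancel_right _ _
  have h2 : ((m + Finsupp.single i 1 : σ →₀ ℕ)) i = m i + 1 := by simp
  rw [h1, h2]
  congr 1
  push_cast
  exact div_mul_cancel₀ _ (Nat.cast_add_one_ne_zero (m i))

theorem intVar_mem_supported {K : Type*} [Field K] {σ : Type*} [DecidableEq σ] {s : Set σ}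
    (i : σ) (hi : i ∈ s) {p : MvPolynomial σ K} (hp : p ∈ supported K s) :
    intVar i p ∈ supported K s := by
  unfold intVar
  refine Subalgebra.sum_mem _ fun m hm => ?_
  have h1 : (monomial (m + Finsupp.single i 1)) (p.coeff m / ((m i : K) + 1))
      = X i * monomial m (p.coeff m / ((m i : K) + 1)) := by
    rw [X, monomial_mul, one_mul, add_comm]
  rw [h1]
  refine mul_mem (X_mem_supported.2 hi) ?_
  rw [mem_supported]
  refine Set.Subset.trans ?_ (mem_supported.1 hp)
  intro j hj
  rw [Finset.mem_coe, mem_vars] at hj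
  obtain ⟨m', hm', hjm'⟩ := hj
  have : m' = m := Finset.mem_singleton.1 (support_monomial_subset hm')
  subst this
  exact Finset.mem_coe.2 (mem_vars j |>.2 ⟨m', hm, hjm'⟩)

/-- For every integer `n ≥ 2` and every `i ≥ 1`, the `i`-th term of the
lower central series of `u_n` equals `u_{n,2} = P₁∂₂ ⊕ ⋯ ⊕ P_{n-1}∂ₙ` (the triangular
derivations with vanishing coefficient at `∂₁`): the lower central series stabilizes at
the first step. -/
theorem triangular_lowerCentralSeries_eq
    (K : Type*) [Field K] [CharZero K] (n : ℕ) (hn : 2 ≤ n) :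
    ∀ i : ℕ, 1 ≤ i →
      (LieModule.lowerCentralSeries K ↥(triangular K n) ↥(triangular K n) i :
          Set ↥(triangular K n)) =
        (lowIdeal K n 1 : Set ↥(triangular K n)) := by
  classical
  set L := ↥(triangular K n) with hL
  set z : Fin n := ⟨0, by omega⟩ with hz
  -- the bracket of any two triangular derivations lies in `lowIdeal K n 1`
  have key1 : ∀ a b : L, ⁅a, b⁆ ∈ lowIdeal K n 1 := by
    intro a b j hj
    have hj0 : (j : ℕ) = 0 := by omega
    have hcoe : (⁅a, b⁆ : L).val = ⁅a.val, b.val⁆ := rfl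
    have hempty : ∀ D : Derivation K (MvPolynomial (Fin n) K) (MvPolynomial (Fin n) K),
        ∀ j' ∈ {j' : Fin n | (j' : ℕ) < (j : ℕ)}, D (X j') = 0 := by
      intro D j' hj'
      exact absurd hj' (by simp [hj0])
    rw [hcoe, Derivation.commutator_apply,
      Derivation.eq_zero_of_forall_eq_zero _ a.val (hempty a.val) (b.2 j),
      Derivation.eq_zero_of_forall_eq_zero _ b.val (hempty b.val) (a.2 j), sub_zero]
  -- forward inclusion for the first step
  have h1 : ∀ x, x ∈ LieModule.lowerCentralSeries K L L 1 → x ∈ lowIdeal K n 1 := by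
    intro x hx
    rw [show (1 : ℕ) = 0 + 1 from rfl, LieModule.lowerCentralSeries_succ] at hx
    rw [← LieSubmodule.mem_toSubmodule, LieSubmodule.lieIdeal_oper_eq_linear_span] at hx
    have hle : Submodule.span K {m | ∃ (x : (⊤ : LieIdeal K L))
        (nn : LieModule.lowerCentralSeries K L L 0), ⁅(x : L), (nn : L)⁆ = m} ≤
        lowIdeal K n 1 := by
      rw [Submodule.span_le]
      rintro _ ⟨a, b, rfl⟩
      exact key1 a b
    exact hle hx
  -- reverse inclusion: `lowIdeal K n 1` is in every term, by integrating w.r.t. `x₁`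
  have hrev : ∀ i : ℕ,
      (lowIdeal K n 1 : Set L) ⊆ (LieModule.lowerCentralSeries K L L i : Set L) := by
    intro i
    induction i with
    | zero => intro D _; simp
    | succ i ih =>
      intro D hD
      have hD' : ∀ j : Fin n, (j : ℕ) < 1 → D.val (X j) = 0 := hD
      set Ed : Derivation K (MvPolynomial (Fin n) K) (MvPolynomial (Fin n) K) :=
        mkDerivation K (fun j : Fin n => intVar z (D.val (X j))) with hEd
      have hEdX : ∀ j : Fin n, Ed (X j) = intVar z (D.val (X j)) := fun j =>
        mkDerivation_X K _ j
      have hEmem : Ed ∈ triangular K n := by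
        intro j
        rw [hEdX]
        by_cases h0 : (j : ℕ) = 0
        · rw [hD' j (by omega), intVar_zero]
          exact zero_mem _
        · refine intVar_mem_supported z ?_ (D.2 j)
          exact Nat.pos_of_ne_zero h0
      set Et : L := ⟨Ed, hEmem⟩ with hEt
      have hEtlow : Et ∈ lowIdeal K n 1 := by
        intro j hj
        have : D.val (X j) = 0 := hD' j hj
        show Ed (X j) = 0
        rw [hEdX, this, intVar_zero]
      have hpdmem : pderiv z ∈ triangular K n := by
        intro i
        rw [pderiv_X]
        by_cases h : z = i
        · subst h; simp only [Pi.single_eq_same]; exact one_mem _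
        · rw [Pi.single_eq_of_ne (Ne.symm h)]; exact zero_mem _
      set pd1 : L := ⟨pderiv z, hpdmem⟩ with hpd1
      have hbr : ⁅pd1, Et⁆ = D := by
        apply Subtype.ext
        have hcoe : (⁅pd1, Et⁆ : L).val = ⁅pderiv z, Ed⁆ := rfl
        rw [hcoe]
        apply derivation_ext
        intro j
        rw [Derivation.commutator_apply]
        have h2 : Ed ((pderiv z) (X j)) = 0 := by
          rw [pderiv_X]
          by_cases h : z = j
          · subst h; simp only [Pi.single_eq_same]; exact Ed.map_one_eq_zero
          · rw [Pi.single_eq_of_ne (Ne.symm h)]; exact Ed.map_zero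
        rw [h2, sub_zero, hEdX, pderiv_intVar]
      rw [← hbr, LieModule.lowerCentralSeries_succ]
      exact LieSubmodule.lie_mem_lie (LieSubmodule.mem_top pd1) (ih hEtlow)
  intro i hi
  apply Set.Subset.antisymm
  · intro x hx
    refine h1 x ?_
    exact LieModule.antitone_lowerCentralSeries K L L hi hx
  · exact hrev i
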